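/- Any subset P of {1,...,n} with |P| ≤ (n-1)/2 is the pinnacle set of some signed permutation in the hyperoctahedral group B_n. -/

import Mathlib

/-- The pinnacle set of a word `w : Fin n → ℤ`: values `w i` (for `0 < i < n-1`)
strictly larger than both neighbors. -/
def PinSet (n : ℕ) (w : Fin n → ℤ) : Set ℤ :=
  {x | ∃ (i : ℕ) (h0 : 0 < i) (h2 : i + 1 < n),
    w ⟨i, by omega⟩ = x ∧ w ⟨i - 1, by omega⟩ < w ⟨i, by omega⟩ ∧
      w ⟨i + 1, h2⟩ < w ⟨i, by omega⟩}

/-- `w : Fin n → ℤ` is the one-line notation of a signed permutation of rank `n`: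
the absolute values of its entries are distinct elements of `{1,...,n}`
(hence a bijection onto `{1,...,n}`). -/
def IsSignedPerm (n : ℕ) (w : Fin n → ℤ) : Prop :=
  (∀ i, 1 ≤ |w i| ∧ |w i| ≤ (n : ℤ)) ∧ Function.Injective fun i => |w i|

/-- `S` is an admissible pinnacle set of the hyperoctahedral group `B_n`. -/
def APSB (n : ℕ) (S : Finset ℤ) : Prop :=
  ∃ w : Fin n → ℤ, IsSignedPerm n w ∧ PinSet n w = ↑S

/-- `S` is an admissible pinnacle set of the type `D` group `D_n`
(signed permutations with an even number of negative one-line entries). -/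
def APSD (n : ℕ) (S : Finset ℤ) : Prop :=
  ∃ w : Fin n → ℤ, IsSignedPerm n w ∧
    Even (Finset.univ.filter fun i => w i < 0).card ∧ PinSet n w = ↑S

/-- `S` is an admissible pinnacle set of the symmetric group `S_n`
(an unsigned permutation is a signed permutation with all entries positive). -/
def APSA (n : ℕ) (S : Finset ℤ) : Prop :=
  ∃ w : Fin n → ℤ, IsSignedPerm n w ∧ (∀ i, 0 < w i) ∧ PinSet n w = ↑S

/-- `T` is an admissible pinnacle set of the totally ordered finite set `X ⊆ ℤ`:
it is the pinnacle set of some arrangement of the elements of `X`. -/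
def APSOn (X : Finset ℤ) (T : Finset ℤ) : Prop :=
  ∃ w : Fin X.card → ℤ, Function.Injective w ∧ (∀ i, w i ∈ X) ∧
    PinSet X.card w = ↑T

def myW (n k : ℕ) (hk : 2 * k < n) (p : Fin k → ℤ) (q : Fin (n - k) → ℤ) :
    Fin n → ℤ := fun i =>
  if h : i.val % 2 = 1 ∧ i.val < 2 * k then
    p ⟨i.val / 2, by omega⟩
  else
    -q ⟨if i.val < 2 * k then i.val / 2 else i.val - k, by
      have hi := i.isLt; split <;> omega⟩

set_option maxHeartbeats 1000000 in
theorem stmt1 (n : ℕ) (P : Finset ℤ) (hP : P ⊆ Finset.Icc 1 (n : ℤ))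
    (hcard : P.card ≤ (n - 1) / 2) : APSB n P := by
  rcases Nat.eq_zero_or_pos n with hn | hn
  · subst hn
    have hPe : P = ∅ := by
      apply Finset.eq_empty_of_forall_notMem
      intro x hx
      have := Finset.mem_Icc.mp (hP hx)
      omega
    refine ⟨Fin.elim0, ⟨fun i => i.elim0, fun i => i.elim0⟩, ?_⟩
    ext x
    simp only [PinSet, Set.mem_setOf_eq, hPe, Finset.coe_empty, Set.mem_empty_iff_false,
      iff_false]
    rintro ⟨i, h0, h2, -⟩
    omega
  · set k := P.card with hkdef
    have hk : 2 * k < n := by omega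
    set Q : Finset ℤ := Finset.Icc 1 (n : ℤ) \ P with hQdef
    have hQcard : Q.card = n - k := by
      rw [hQdef, Finset.card_sdiff_of_subset hP, Int.card_Icc]
      simp [hkdef]
    set p : Fin k → ℤ := fun t => ((P.orderIsoOfFin rfl) t : ℤ) with hpdef
    set q : Fin (n - k) → ℤ := fun t => ((Q.orderIsoOfFin hQcard) t : ℤ) with hqdef
    have hp_mem : ∀ t, p t ∈ P := fun t => ((P.orderIsoOfFin rfl) t).2
    have hq_mem : ∀ t, q t ∈ Q := fun t => ((Q.orderIsoOfFin hQcard) t).2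
    have hp_bd : ∀ t, 1 ≤ p t ∧ p t ≤ (n : ℤ) := fun t => Finset.mem_Icc.mp (hP (hp_mem t))
    have hq_bd : ∀ t, 1 ≤ q t ∧ q t ≤ (n : ℤ) := fun t =>
      Finset.mem_Icc.mp ((Finset.mem_sdiff.mp (hq_mem t)).1)
    have hp_pos : ∀ t, 0 ≤ p t := fun t => by linarith [(hp_bd t).1]
    have hq_pos : ∀ t, 0 ≤ q t := fun t => by linarith [(hq_bd t).1]
    have hq_notP : ∀ t, q t ∉ P := fun t => (Finset.mem_sdiff.mp (hq_mem t)).2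
    have hp_inj : Function.Injective p := fun a b h =>
      (P.orderIsoOfFin rfl).injective (Subtype.ext h)
    have hq_mono : StrictMono q := fun a b h => by
      exact_mod_cast (Q.orderIsoOfFin hQcard).strictMono h
    have hp_surj : ∀ x ∈ P, ∃ t, p t = x := fun x hx =>
      ⟨(P.orderIsoOfFin rfl).symm ⟨x, hx⟩,
        congrArg Subtype.val ((P.orderIsoOfFin rfl).apply_symm_apply ⟨x, hx⟩)⟩
    have key : ∀ (j : Fin (n - k)) (s : Fin k), -q j < p s := fun j s => by
      have h1 := (hq_bd j).1
      have h2 := (hp_bd s).1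
      linarith
    -- evaluation lemmas
    have ev1 : ∀ (i : ℕ) (hi : i < n) (ho : i % 2 = 1) (hlt : i < 2 * k),
        myW n k hk p q ⟨i, hi⟩ = p ⟨i / 2, by omega⟩ :=
      fun i hi ho hlt => dif_pos ⟨ho, hlt⟩
    have evn : ∀ (i : ℕ) (hi : i < n) (hc : ¬(i % 2 = 1 ∧ i < 2 * k)),
        ∃ j : Fin (n - k), myW n k hk p q ⟨i, hi⟩ = -q j :=
      fun i hi hc => ⟨_, dif_neg hc⟩
    have ev2 : ∀ (i : ℕ) (hi : i < n) (hc : ¬(i % 2 = 1 ∧ i < 2 * k)) (hlt : i < 2 * k)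
        (hj : i / 2 < n - k), myW n k hk p q ⟨i, hi⟩ = -q ⟨i / 2, hj⟩ := by
      intro i hi hc hlt hj
      simp only [myW, dif_neg hc]
      exact congrArg Neg.neg (congrArg q (Fin.ext (by simp [hlt])))
    have ev3 : ∀ (i : ℕ) (hi : i < n) (hc : ¬(i % 2 = 1 ∧ i < 2 * k)) (hge : 2 * k ≤ i)
        (hj : i - k < n - k), myW n k hk p q ⟨i, hi⟩ = -q ⟨i - k, hj⟩ := by
      intro i hi hc hge hj
      simp only [myW, dif_neg hc]
      refine congrArg Neg.neg (congrArg q (Fin.ext ?_))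
      simp only [if_neg (by omega : ¬ i < 2 * k)]
    refine ⟨myW n k hk p q, ⟨?_, ?_⟩, ?_⟩
    · intro i
      simp only [myW]
      split
      · rw [abs_of_nonneg (hp_pos _)]
        exact hp_bd _
      · rw [abs_neg, abs_of_nonneg (hq_pos _)]
        exact hq_bd _
    · rintro ⟨a, ha⟩ ⟨b, hb⟩ hab
      simp only at hab
      by_cases h1 : a % 2 = 1 ∧ a < 2 * k <;> by_cases h2 : b % 2 = 1 ∧ b < 2 * k
      · rw [ev1 a ha h1.1 h1.2, ev1 b hb h2.1 h2.2,
          abs_of_nonneg (hp_pos _), abs_of_nonneg (hp_pos _)] at hab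
        have hv : a / 2 = b / 2 := Fin.mk.inj_iff.mp (hp_inj hab)
        simp only [Fin.mk.injEq]; omega
      · obtain ⟨j, hj⟩ := evn b hb h2
        rw [ev1 a ha h1.1 h1.2, hj, abs_of_nonneg (hp_pos _), abs_neg,
          abs_of_nonneg (hq_pos _)] at hab
        exact absurd (hab ▸ hp_mem _) (hq_notP _)
      · obtain ⟨j, hj⟩ := evn a ha h1
        rw [ev1 b hb h2.1 h2.2, hj, abs_neg, abs_of_nonneg (hq_pos _),
          abs_of_nonneg (hp_pos _)] at hab
        exact absurd (hab.symm ▸ hp_mem _) (hq_notP _)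
      · by_cases hla : a < 2 * k <;> by_cases hlb : b < 2 * k
        · have hja : a / 2 < n - k := by omega
          have hjb : b / 2 < n - k := by omega
          rw [ev2 a ha h1 hla hja, ev2 b hb h2 hlb hjb, abs_neg, abs_neg,
            abs_of_nonneg (hq_pos _), abs_of_nonneg (hq_pos _)] at hab
          have hv : a / 2 = b / 2 := Fin.mk.inj_iff.mp (hq_mono.injective hab)
          simp only [Fin.mk.injEq]; omega
        · have hja : a / 2 < n - k := by omega
          have hgb : 2 * k ≤ b := by omega
          have hjb : b - k < n - k := by omega
          rw [ev2 a ha h1 hla hja, ev3 b hb h2 hgb hjb, abs_neg, abs_neg,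
            abs_of_nonneg (hq_pos _), abs_of_nonneg (hq_pos _)] at hab
          have hv : a / 2 = b - k := Fin.mk.inj_iff.mp (hq_mono.injective hab)
          simp only [Fin.mk.injEq]; omega
        · have hga : 2 * k ≤ a := by omega
          have hja : a - k < n - k := by omega
          have hjb : b / 2 < n - k := by omega
          rw [ev3 a ha h1 hga hja, ev2 b hb h2 hlb hjb, abs_neg, abs_neg,
            abs_of_nonneg (hq_pos _), abs_of_nonneg (hq_pos _)] at hab
          have hv : a - k = b / 2 := Fin.mk.inj_iff.mp (hq_mono.injective hab)
          simp only [Fin.mk.injEq]; omega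
        · have hga : 2 * k ≤ a := by omega
          have hja : a - k < n - k := by omega
          have hgb : 2 * k ≤ b := by omega
          have hjb : b - k < n - k := by omega
          rw [ev3 a ha h1 hga hja, ev3 b hb h2 hgb hjb, abs_neg,
            abs_neg, abs_of_nonneg (hq_pos _), abs_of_nonneg (hq_pos _)] at hab
          have hv : a - k = b - k := Fin.mk.inj_iff.mp (hq_mono.injective hab)
          simp only [Fin.mk.injEq]; omega
    · ext x
      simp only [PinSet, Set.mem_setOf_eq, Finset.mem_coe]
      constructor
      · rintro ⟨i, h0, h2, hval, hl, hr⟩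
        have hi : i < n := by omega
        have hi1 : i - 1 < n := by omega
        by_cases hc : i % 2 = 1 ∧ i < 2 * k
        · rw [ev1 i hi hc.1 hc.2] at hval
          exact hval ▸ hp_mem _
        · exfalso
          obtain ⟨j, hj⟩ := evn i hi hc
          rw [hj] at hl
          by_cases hd : (i - 1) % 2 = 1 ∧ i - 1 < 2 * k
          · rw [ev1 (i - 1) hi1 hd.1 hd.2] at hl
            exact absurd hl (not_lt.mpr (key _ _).le)
          · have hge : 2 * k ≤ i - 1 := by omega
            have hj1 : i - 1 - k < n - k := by omega
            have hgei : 2 * k ≤ i := by omega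
            have hji : i - k < n - k := by omega
            rw [ev3 (i - 1) hi1 hd hge hj1] at hl
            rw [ev3 i hi hc hgei hji] at hj
            rw [← hj] at hl
            have hlt : (⟨i - 1 - k, hj1⟩ : Fin (n - k)) < ⟨i - k, hji⟩ := by
              simp only [Fin.mk_lt_mk]; omega
            have hmono := hq_mono hlt
            omega
      · intro hx
        obtain ⟨t, ht⟩ := hp_surj x hx
        have htl := t.isLt
        have e1 : 2 * t.val + 1 < n := by omega
        have e2 : (2 * t.val + 1) % 2 = 1 := by omega
        have e3 : 2 * t.val + 1 < 2 * k := by omega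
        have e4 : 2 * t.val + 1 - 1 < n := by omega
        have e5 : ¬((2 * t.val + 1 - 1) % 2 = 1 ∧ 2 * t.val + 1 - 1 < 2 * k) := by omega
        have e6 : 2 * t.val + 1 + 1 < n := by omega
        have e7 : ¬((2 * t.val + 1 + 1) % 2 = 1 ∧ 2 * t.val + 1 + 1 < 2 * k) := by omega
        refine ⟨2 * t.val + 1, by omega, e6, ?_, ?_, ?_⟩
        · rw [ev1 (2 * t.val + 1) e1 e2 e3, ← ht]
          exact congrArg p (Fin.ext (by simp; omega))
        · rw [ev1 (2 * t.val + 1) e1 e2 e3]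
          obtain ⟨j, hj⟩ := evn (2 * t.val + 1 - 1) e4 e5
          rw [hj]
          exact key _ _
        · rw [ev1 (2 * t.val + 1) e1 e2 e3]
          obtain ⟨j, hj⟩ := evn (2 * t.val + 1 + 1) e6 e7
          rw [hj]
          exact key _ _
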